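/- Let R be a commutative ring and let B and B' be semidualizing R-modules such that Tor_i^R(B, B') = 0 for all i ≥ 1. Then for every projective R-module P, every injective R-module I, and every i ≥ 1, one has Ext^i_R(P ⊗_R B, Hom_R(B', I)) = 0. -/

import Mathlib

/-! **Statement 18** (Lemma 5.19): for semidualizing modules `B, B'` over a commutative
ring `R` with `Tor^R_{≥1}(B, B') = 0`, one has `P_B(R) ⊥ I_{B'}(R)`. -/

open CategoryTheory CategoryTheory.Limits Opposite

universe u

variable (R : Type u) [CommRing R]

/-- An `R`-module `C` is *semidualizing* if it admits a (possibly unbounded) resolution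
by finite rank free `R`-modules, the homothety map `R → Hom_R(C, C)` is an isomorphism,
and `Ext^i_R(C, C) = 0` for all `i ≥ 1`. -/
def IsSemidualizing (C : Type u) [AddCommGroup C] [Module R C] : Prop :=
  (∃ (P : ChainComplex (ModuleCat.{u} R) ℕ) (π : P.X 0 ⟶ ModuleCat.of R C)
      (w : P.d 1 0 ≫ π = 0),
      (∀ j, Module.Finite R (P.X j) ∧ Module.Free R (P.X j)) ∧
      (∀ j, (P.augment π w).ExactAt j)) ∧
  Function.Bijective (fun r : R => r • (LinearMap.id : C →ₗ[R] C)) ∧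
  (∀ i : ℕ, 1 ≤ i →
    IsZero (((Ext R (ModuleCat.{u} R) i).obj (op (ModuleCat.of R C))).obj
      (ModuleCat.of R C)))

namespace Stmt18Aux

open CategoryTheory.MonoidalCategory LinearMap TensorProduct

section Chase
variable {R : Type u} [CommRing R]

theorem commsq {K G N F : Type u}
    [AddCommGroup K] [Module R K] [AddCommGroup G] [Module R G]
    [AddCommGroup N] [Module R N] [AddCommGroup F] [Module R F]
    (k : K →ₗ[R] G) (n : N →ₗ[R] F) (z : K ⊗[R] N) :
    lTensor G n (rTensor N k z) = rTensor F k (lTensor K n z) := by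
  have e1 : lTensor G n ∘ₗ rTensor N k = rTensor F k ∘ₗ lTensor K n := by
    rw [LinearMap.lTensor_comp_rTensor, LinearMap.rTensor_comp_lTensor]
  exact DFunLike.congr_fun e1 z

/-- Dimension-shifting chase: if `Tor₁(X, N) = 0` in the incarnation
`K ⊗ N → G ⊗ N` injective (`0 → K → G → X → 0` exact, `G` flat), then
`K ⊗ N → K ⊗ F` is injective for any injection `n : N → F`. -/
theorem chaseC {K G N F : Type u}
    [AddCommGroup K] [Module R K] [AddCommGroup G] [Module R G]
    [AddCommGroup N] [Module R N] [AddCommGroup F] [Module R F]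
    [Module.Flat R G]
    (k : K →ₗ[R] G) (n : N →ₗ[R] F) (hn : Function.Injective n)
    (h : Function.Injective (rTensor N k)) :
    Function.Injective (lTensor K n) := by
  have h2 : Function.Injective (lTensor G n) :=
    Module.Flat.lTensor_preserves_injective_linearMap n hn
  intro a b hab
  apply h; apply h2
  rw [commsq, commsq, hab]

/-- Balance chase: vanishing of `Tor₁(X, Y)` computed from a flat presentation of `Y`
implies its vanishing computed from a flat presentation of `X`. -/
theorem chaseMain {K G X N F Y : Type u}
    [AddCommGroup K] [Module R K] [AddCommGroup G] [Module R G]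
    [AddCommGroup X] [Module R X] [AddCommGroup N] [Module R N]
    [AddCommGroup F] [Module R F] [AddCommGroup Y] [Module R Y]
    [Module.Flat R G] [Module.Flat R F]
    (k : K →ₗ[R] G) (g : G →ₗ[R] X) (n : N →ₗ[R] F) (f : F →ₗ[R] Y)
    (hk : Function.Injective k) (hkg : Function.Exact k g) (hg : Function.Surjective g)
    (hnf : Function.Exact n f) (hf : Function.Surjective f)
    (h : Function.Injective (lTensor X n)) :
    Function.Injective (rTensor Y k) := by
  have hgk : g ∘ₗ k = 0 := by ext x; exact hkg.apply_apply_eq_zero x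
  have hfn : f ∘ₗ n = 0 := by ext x; exact hnf.apply_apply_eq_zero x
  rw [← LinearMap.ker_eq_bot, LinearMap.ker_eq_bot']
  intro t ht
  obtain ⟨u, hu⟩ := LinearMap.lTensor_surjective K hf t
  set v : G ⊗[R] F := rTensor F k u with hv
  have hv0 : lTensor G f v = 0 := by
    have e1 : lTensor G f ∘ₗ rTensor F k = rTensor Y k ∘ₗ lTensor K f := by
      rw [LinearMap.lTensor_comp_rTensor, LinearMap.rTensor_comp_lTensor]
    have e2 := DFunLike.congr_fun e1 u
    simp only [LinearMap.comp_apply] at e2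
    rw [hv, e2, hu, ht]
  obtain ⟨w, hw⟩ := (lTensor_exact G hnf hf) v |>.mp hv0
  set x : X ⊗[R] N := rTensor N g w with hx
  have hx0 : lTensor X n x = 0 := by
    have e1 : lTensor X n ∘ₗ rTensor N g = rTensor F g ∘ₗ lTensor G n := by
      rw [LinearMap.lTensor_comp_rTensor, LinearMap.rTensor_comp_lTensor]
    have e2 := DFunLike.congr_fun e1 w
    simp only [LinearMap.comp_apply] at e2
    rw [hx, e2, hw, hv, ← LinearMap.comp_apply, ← LinearMap.rTensor_comp, hgk,
      LinearMap.rTensor_zero, LinearMap.zero_apply]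
  have hxz : x = 0 := by
    apply h
    rw [hx0, map_zero]
  have hker : rTensor N g w = 0 := by rw [← hx, hxz]
  obtain ⟨s, hs⟩ := (rTensor_exact N hkg hg) w |>.mp hker
  have hinjF : Function.Injective (rTensor F k) :=
    Module.Flat.rTensor_preserves_injective_linearMap k hk
  have hu' : u = lTensor K n s := by
    apply hinjF
    rw [← commsq, hs, hw]
  rw [← hu, hu', ← LinearMap.comp_apply, ← LinearMap.lTensor_comp, hfn,
    LinearMap.lTensor_zero, LinearMap.zero_apply]
end Chase

section ExtFac
variable {R : Type u} [CommRing R]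

/-- Extend a map into `Hom(B', I)` along `k`, provided `k ⊗ B'` is injective and `I`
is injective. -/
theorem extension_lemma {K G B' I : Type u}
    [AddCommGroup K] [Module R K] [AddCommGroup G] [Module R G]
    [AddCommGroup B'] [Module R B'] [AddCommGroup I] [Module R I]
    [Module.Injective R I]
    (k : K →ₗ[R] G) (h : Function.Injective (rTensor B' k))
    (ψ : K →ₗ[R] B' →ₗ[R] I) :
    ∃ Ψ : G →ₗ[R] B' →ₗ[R] I, Ψ ∘ₗ k = ψ := by
  obtain ⟨T, hT⟩ := Module.Injective.out (rTensor B' k) h (TensorProduct.lift ψ)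
  refine ⟨TensorProduct.curry T, ?_⟩
  ext x b
  have := hT (x ⊗ₜ[R] b)
  simpa [TensorProduct.curry_apply] using this

/-- Factor a linear map through a surjection whose kernel it kills. -/
theorem factor_lemma {G K J : Type u}
    [AddCommGroup G] [Module R G] [AddCommGroup K] [Module R K]
    [AddCommGroup J] [Module R J]
    (p : G →ₗ[R] K) (hp : Function.Surjective p) (φ : G →ₗ[R] J)
    (h : ∀ x, p x = 0 → φ x = 0) :
    ∃ ψ : K →ₗ[R] J, ψ ∘ₗ p = φ := by
  have hle : LinearMap.ker p ≤ LinearMap.ker φ := fun x hx => h x hx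
  let e : (G ⧸ LinearMap.ker p) ≃ₗ[R] K := p.quotKerEquivOfSurjective hp
  refine ⟨(LinearMap.ker p).liftQ φ hle ∘ₗ (e.symm : K →ₗ[R] G ⧸ LinearMap.ker p), ?_⟩
  ext x
  have he : e.symm (p x) = Submodule.Quotient.mk x := by
    apply e.injective
    simp [e, LinearMap.quotKerEquivOfSurjective]
  simp [he]
end ExtFac

section Tower
variable {R : Type u} [CommRing R] {X : ModuleCat.{u} R}

/-- The syzygy tower of a projective resolution in `ModuleCat R`: the `j`-th syzygy
(`X` itself for `j = 0`), the surjection onto it from `Q.complex.X j`, and the fact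
that the next differential composes to zero with that surjection. -/
noncomputable def tower (Q : ProjectiveResolution X) :
    ∀ j : ℕ, Σ' (K : ModuleCat.{u} R) (p : Q.complex.X j ⟶ K),
      Q.complex.d (j + 1) j ≫ p = 0
  | 0 => ⟨X, Q.π.f 0, Q.complex_d_comp_π_f_zero⟩
  | (j+1) =>
    ⟨ModuleCat.of R (LinearMap.ker ((tower Q j).2.1).hom),
      ModuleCat.ofHom (LinearMap.codRestrict _ (Q.complex.d (j+1) j).hom
        (fun x => by
          have := congrArg (fun f => f.hom x) (tower Q j).2.2
          simpa using this)),
      by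
        have h2 : Q.complex.d (j+2) (j+1) ≫ Q.complex.d (j+1) j = 0 := Q.complex.d_comp_d _ _ _
        ext x : 2
        refine Subtype.ext ?_
        show Q.complex.d (j+1) j (Q.complex.d (j+2) (j+1) x) = 0
        exact congrArg (fun f => f.hom x) h2⟩

variable (Q : ProjectiveResolution X)

/-- The `j`-th syzygy module of a projective resolution. -/
noncomputable def syzM (j : ℕ) : ModuleCat.{u} R := (tower Q j).1

/-- The canonical surjection onto the `j`-th syzygy. -/
noncomputable def syzP (j : ℕ) : Q.complex.X j ⟶ syzM Q j := (tower Q j).2.1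

/-- The inclusion of the `(j+1)`-st syzygy. -/
noncomputable def syzI (j : ℕ) : syzM Q (j+1) ⟶ Q.complex.X j :=
  ModuleCat.ofHom (LinearMap.ker (syzP Q j).hom).subtype

lemma syzI_injective (j : ℕ) : Function.Injective (syzI Q j) := fun _ _ h => Subtype.val_injective h

lemma syzI_comp_syzP (j : ℕ) :
    (syzI Q j).hom ∘ₗ (syzP Q (j+1)).hom = (Q.complex.d (j+1) j).hom := rfl

lemma syz_exact (j : ℕ) :
    Function.Exact (syzI Q j).hom
      (syzP Q j).hom := by
  intro y
  constructor
  · intro hy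
    exact ⟨⟨y, hy⟩, rfl⟩
  · rintro ⟨⟨z, hz⟩, rfl⟩
    exact hz

lemma syzP_comp_syzI (j : ℕ) :
    (syzP Q j).hom ∘ₗ (syzI Q j).hom = 0 := by
  ext x
  exact x.2

lemma ker_sub_range (j : ℕ) (x : Q.complex.X j) (hx : syzP Q j x = 0) :
    ∃ y, Q.complex.d (j+1) j y = x := by
  cases j with
  | zero =>
    have h := Q.exact₀
    rw [ShortComplex.moduleCat_exact_iff] at h
    exact h x hx
  | succ j =>
    have h := Q.exact_succ j
    rw [ShortComplex.moduleCat_exact_iff] at h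
    refine h x ?_
    exact congrArg Subtype.val hx

lemma syzP_surjective (j : ℕ) :
    Function.Surjective (syzP Q j).hom := by
  cases j with
  | zero => exact (ModuleCat.epi_iff_surjective (Q.π.f 0)).mp inferInstance
  | succ j =>
    rintro ⟨x, hx⟩
    obtain ⟨y, hy⟩ := ker_sub_range Q j x hx
    exact ⟨y, Subtype.ext hy⟩

instance syz_projective (j : ℕ) : Module.Projective R (Q.complex.X j) := by
  have : Projective (ModuleCat.of R (Q.complex.X j)) :=
    Projective.of_iso (Iso.refl (Q.complex.X j)) inferInstance
  exact (IsProjective.iff_projective _).mpr this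

instance syz_flat (j : ℕ) : Module.Flat R (Q.complex.X j) := inferInstance

lemma syzP_comp_d_eq_zero (j : ℕ) :
    (syzP Q (j+1)).hom ∘ₗ (Q.complex.d (j+2) (j+1)).hom = 0 := by
  rw [← syzI_comp_syzP, ← LinearMap.comp_assoc, syzP_comp_syzI, LinearMap.zero_comp]

end Tower

section TorInterface
variable {R : Type u} [CommRing R]

/-- Vanishing of all higher `Tor (Bm, B')` yields injectivity of `Bm ⊗ (syzygy) → Bm ⊗ F`
for all syzygies of any projective resolution of `B'`. -/
theorem tor_vanish_syz (Bm B'o : ModuleCat.{u} R) (Q' : ProjectiveResolution B'o)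
    (htor : ∀ i : ℕ, 1 ≤ i →
      IsZero (((Tor (ModuleCat.{u} R) i).obj Bm).obj B'o)) (m : ℕ) :
    Function.Injective (lTensor (↑Bm) (syzI Q' m).hom) := by
  have hexact : ∀ i : ℕ, 1 ≤ i →
      ((((tensoringLeft (ModuleCat.{u} R)).obj Bm).mapHomologicalComplex
        (ComplexShape.down ℕ)).obj Q'.complex).ExactAt i := by
    intro i hi
    rw [HomologicalComplex.exactAt_iff_isZero_homology]
    exact IsZero.of_iso (htor i hi)
      ((Q'.isoLeftDerivedObj ((tensoringLeft (ModuleCat.{u} R)).obj Bm) i).symm)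
  have he := hexact (m+1) (by omega)
  rw [HomologicalComplex.exactAt_iff' _ (m+2) (m+1) m (by simp) (by simp)] at he
  rw [ShortComplex.moduleCat_exact_iff] at he
  rw [← LinearMap.ker_eq_bot, LinearMap.ker_eq_bot']
  intro x hx
  obtain ⟨y, hy⟩ := LinearMap.lTensor_surjective (↑Bm) (syzP_surjective Q' (m+1)) x
  have h1 : lTensor (↑Bm) (Q'.complex.d (m+1) m).hom y = 0 := by
    rw [← syzI_comp_syzP, LinearMap.lTensor_comp, LinearMap.comp_apply, hy, hx]
  obtain ⟨(z : ↑Bm ⊗[R] ↑(Q'.complex.X (m+2))), hz2⟩ := he y h1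
  have hz2' : lTensor (↑Bm) (Q'.complex.d (m+2) (m+1)).hom z = y := hz2
  rw [← hy, ← hz2', ← LinearMap.comp_apply, ← LinearMap.lTensor_comp,
    syzP_comp_d_eq_zero, LinearMap.lTensor_zero, LinearMap.zero_apply]
end TorInterface

section FlatTransfer
variable {R : Type u} [CommRing R]

theorem flat_transfer {P B N F' : Type u}
    [AddCommGroup P] [Module R P] [AddCommGroup B] [Module R B]
    [AddCommGroup N] [Module R N] [AddCommGroup F'] [Module R F']
    [Module.Flat R P]
    (f : N →ₗ[R] F') (h : Function.Injective (lTensor B f)) :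
    Function.Injective (lTensor (TensorProduct R P B) f) := by
  have hP : Function.Injective (lTensor P (lTensor B f)) :=
    Module.Flat.lTensor_preserves_injective_linearMap _ h
  have e : (TensorProduct.assoc R P B F').toLinearMap ∘ₗ lTensor (TensorProduct R P B) f
      = lTensor P (lTensor B f) ∘ₗ (TensorProduct.assoc R P B N).toLinearMap := by
    apply TensorProduct.ext_threefold
    intro x y z
    rfl
  intro a b hab
  apply (TensorProduct.assoc R P B N).injective
  apply hP
  have e1 := DFunLike.congr_fun e a
  have e2 := DFunLike.congr_fun e b
  simp only [LinearMap.comp_apply, LinearEquiv.coe_coe] at e1 e2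
  rw [← e1, ← e2, hab]
end FlatTransfer

end Stmt18Aux

open Stmt18Aux LinearMap

/-- Let `R` be a commutative ring and `B`, `B'` semidualizing
`R`-modules with `Tor_i^R(B, B') = 0` for all `i ≥ 1`. Then for every projective
`R`-module `P`, every injective `R`-module `I`, and every `i ≥ 1`,
`Ext^i_R(P ⊗_R B, Hom_R(B', I)) = 0`. -/
theorem stmt18 (B B' : Type u)
    [AddCommGroup B] [Module R B] [AddCommGroup B'] [Module R B']
    (hB : IsSemidualizing R B) (hB' : IsSemidualizing R B')
    (htor : ∀ i : ℕ, 1 ≤ i →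
      IsZero (((Tor (ModuleCat.{u} R) i).obj (ModuleCat.of R B)).obj
        (ModuleCat.of R B'))) :
    ∀ (P : Type u) [AddCommGroup P] [Module R P] [Module.Projective R P]
      (I : Type u) [AddCommGroup I] [Module R I] [Module.Injective R I]
      (i : ℕ), 1 ≤ i →
      IsZero (((Ext R (ModuleCat.{u} R) i).obj
        (op (ModuleCat.of R (TensorProduct R P B)))).obj
        (ModuleCat.of R (B' →ₗ[R] I))) := by
  intro P _ _ _ I _ _ _ i hi
  obtain ⟨n, rfl⟩ : ∃ n, i = n + 1 := ⟨i - 1, by omega⟩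
  let Mo : ModuleCat.{u} R := ModuleCat.of R (TensorProduct R P B)
  let Jo : ModuleCat.{u} R := ModuleCat.of R (B' →ₗ[R] I)
  let B'o : ModuleCat.{u} R := ModuleCat.of R B'
  have hMres : HasProjectiveResolution Mo := inferInstance
  have hBres : HasProjectiveResolution B'o := inferInstance
  let Q : ProjectiveResolution Mo := hMres.out.some
  let Q' : ProjectiveResolution B'o := hBres.out.some
  -- balance induction
  have key : ∀ j m : ℕ, Function.Injective
      (lTensor (R := R) (↑(syzM Q j)) (syzI Q' m).hom) := by
    intro j
    induction j with
    | zero =>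
      intro m
      exact flat_transfer (P := P) (B := B) _
        (tor_vanish_syz (ModuleCat.of R B) B'o Q' htor m)
    | succ j ih =>
      intro m
      have hA : Function.Injective
          (rTensor (R := R) (↑(syzM Q' (m+1))) (syzI Q j).hom) :=
        chaseMain (syzI Q j).hom (syzP Q j).hom
          (syzI Q' (m+1)).hom (syzP Q' (m+1)).hom
          (syzI_injective Q j) (syz_exact Q j) (syzP_surjective Q j)
          (syz_exact Q' (m+1)) (syzP_surjective Q' (m+1)) (ih (m+1))
      exact chaseC (syzI Q j).hom (syzI Q' m).hom
        (syzI_injective Q' m) hA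
  have hA0 : ∀ j, Function.Injective
      (rTensor (R := R) (↑(syzM Q' 0)) (syzI Q j).hom) :=
    fun j => chaseMain (syzI Q j).hom (syzP Q j).hom
      (syzI Q' 0).hom (syzP Q' 0).hom
      (syzI_injective Q j) (syz_exact Q j) (syzP_surjective Q j)
      (syz_exact Q' 0) (syzP_surjective Q' 0) (key j 0)
  -- Ext via the chosen projective resolution
  refine IsZero.of_iso ?_ (Q.isoExt (n+1) Jo)
  rw [← HomologicalComplex.exactAt_iff_isZero_homology]
  rw [HomologicalComplex.exactAt_iff' _ n (n+1) (n+2) (by simp) (by simp)]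
  rw [ShortComplex.moduleCat_exact_iff]
  intro φ hφ
  let φ' : Q.complex.X (n+1) ⟶ Jo := φ
  have hφ' : φ'.hom ∘ₗ
      (Q.complex.d (n+2) (n+1)).hom = 0 :=
      congrArg ModuleCat.Hom.hom (hφ : Q.complex.d (n+2) (n+1) ≫ φ' = 0)
  have hkill : ∀ x : Q.complex.X (n+1), syzP Q (n+1) x = 0 → φ' x = 0 := by
    intro x hx
    obtain ⟨y, hy⟩ := ker_sub_range Q (n+1) x hx
    rw [← hy]
    exact DFunLike.congr_fun hφ' y
  obtain ⟨ψ, hψ⟩ := factor_lemma (syzP Q (n+1)).hom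
    (syzP_surjective Q (n+1)) φ'.hom hkill
  obtain ⟨Ψ, hΨ⟩ := extension_lemma (R := R) (syzI Q n).hom (hA0 n) ψ
  refine ⟨ModuleCat.ofHom Ψ, ?_⟩
  have final : (Ψ : Q.complex.X n →ₗ[R] (B' →ₗ[R] I)) ∘ₗ
      (Q.complex.d (n+1) n).hom = φ'.hom := by
    rw [← syzI_comp_syzP, ← LinearMap.comp_assoc, hΨ]
    exact hψ
  exact (ModuleCat.hom_ext final : Q.complex.d (n+1) n ≫ ModuleCat.ofHom Ψ = φ')
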